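/- arXiv:math/0405176 — 2 statements merged into one kernel-verified Lean document; each statement's English description precedes it below -/
import Mathlib

section
/- Assume q is not a root of unity. Then there exist a positive integer N and a polynomial b ∈ k[S,T] in two variables (depending only on C_0 and q) such that α_{r,m} = (q^m r)^{−N} · b(r, q^m) for all r ∈ k^× and all m ≥ 2. -/
open FreeAlgebra DirectSum

set_option maxSynthPendingDepth 3

namespace QSO

/-- Generators of `U_q(sl₂)`. -/
inductive GenU : Type | E | F | K | K'

/-- Generators of the quantized symplectic oscillator algebra. -/
inductive Gen : Type | E | F | K | K' | X | Y

variable (k : Type) [Field k] (q : k)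

/-- Defining relations of `U_q(sl₂)`. -/
inductive UqRel : FreeAlgebra k GenU → FreeAlgebra k GenU → Prop
  | KK' : UqRel (ι k GenU.K * ι k GenU.K') 1
  | K'K : UqRel (ι k GenU.K' * ι k GenU.K) 1
  | KE : UqRel (ι k GenU.K * ι k GenU.E) (algebraMap k (FreeAlgebra k GenU) (q ^ 2) * (ι k GenU.E * ι k GenU.K))
  | KF : UqRel (ι k GenU.K * ι k GenU.F) (algebraMap k (FreeAlgebra k GenU) (q⁻¹ ^ 2) * (ι k GenU.F * ι k GenU.K))
  | EF : UqRel (ι k GenU.E * ι k GenU.F - ι k GenU.F * ι k GenU.E)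
      (algebraMap k (FreeAlgebra k GenU) ((q - q⁻¹)⁻¹) * (ι k GenU.K - ι k GenU.K'))

/-- The quantized enveloping algebra `U_q(sl₂)`. -/
abbrev Uq := RingQuot (UqRel k q)

noncomputable def uE : Uq k q := RingQuot.mkAlgHom k (UqRel k q) (ι k GenU.E)
noncomputable def uF : Uq k q := RingQuot.mkAlgHom k (UqRel k q) (ι k GenU.F)
noncomputable def uK : Uq k q := RingQuot.mkAlgHom k (UqRel k q) (ι k GenU.K)
noncomputable def uK' : Uq k q := RingQuot.mkAlgHom k (UqRel k q) (ι k GenU.K')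

/-- The image in `U_q(sl₂)` of the chosen element `C₀`. -/
noncomputable def uC (C : FreeAlgebra k GenU) : Uq k q := RingQuot.mkAlgHom k (UqRel k q) C

/-- Defining relations of the quantized symplectic oscillator algebra of rank one;
`Cl` is a lift of the central element `C₀` to the free algebra. -/
inductive ARel (Cl : FreeAlgebra k Gen) : FreeAlgebra k Gen → FreeAlgebra k Gen → Prop
  | KK' : ARel Cl (ι k Gen.K * ι k Gen.K') 1
  | K'K : ARel Cl (ι k Gen.K' * ι k Gen.K) 1
  | KE : ARel Cl (ι k Gen.K * ι k Gen.E) (algebraMap k (FreeAlgebra k Gen) (q ^ 2) * (ι k Gen.E * ι k Gen.K))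
  | KF : ARel Cl (ι k Gen.K * ι k Gen.F) (algebraMap k (FreeAlgebra k Gen) (q⁻¹ ^ 2) * (ι k Gen.F * ι k Gen.K))
  | EF : ARel Cl (ι k Gen.E * ι k Gen.F - ι k Gen.F * ι k Gen.E)
      (algebraMap k (FreeAlgebra k Gen) ((q - q⁻¹)⁻¹) * (ι k Gen.K - ι k Gen.K'))
  | EX : ARel Cl (ι k Gen.E * ι k Gen.X) (algebraMap k (FreeAlgebra k Gen) q * (ι k Gen.X * ι k Gen.E))
  | EY : ARel Cl (ι k Gen.E * ι k Gen.Y) (ι k Gen.X + algebraMap k (FreeAlgebra k Gen) q⁻¹ * (ι k Gen.Y * ι k Gen.E))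
  | FX : ARel Cl (ι k Gen.F * ι k Gen.X) (ι k Gen.Y * ι k Gen.K' + ι k Gen.X * ι k Gen.F)
  | FY : ARel Cl (ι k Gen.F * ι k Gen.Y) (ι k Gen.Y * ι k Gen.F)
  | KX : ARel Cl (ι k Gen.K * ι k Gen.X) (algebraMap k (FreeAlgebra k Gen) q * (ι k Gen.X * ι k Gen.K))
  | KY : ARel Cl (ι k Gen.K * ι k Gen.Y) (algebraMap k (FreeAlgebra k Gen) q⁻¹ * (ι k Gen.Y * ι k Gen.K))
  | YX : ARel Cl (algebraMap k (FreeAlgebra k Gen) q * (ι k Gen.Y * ι k Gen.X) - ι k Gen.X * ι k Gen.Y) Cl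

/-- Inclusion of the free algebra on `E, F, K, K⁻¹` into the free algebra on all six
generators. -/
noncomputable def incl : FreeAlgebra k GenU →ₐ[k] FreeAlgebra k Gen :=
  FreeAlgebra.lift k (fun g => match g with
    | GenU.E => ι k Gen.E
    | GenU.F => ι k Gen.F
    | GenU.K => ι k Gen.K
    | GenU.K' => ι k Gen.K')

/-- The quantized symplectic oscillator algebra of rank one, for the central element
(represented by) `C`. -/
abbrev QSOAlg (C : FreeAlgebra k GenU) := RingQuot (ARel k q (incl k C))

variable (C : FreeAlgebra k GenU)

noncomputable def aE : QSOAlg k q C := RingQuot.mkAlgHom k (ARel k q (incl k C)) (ι k Gen.E)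
noncomputable def aF : QSOAlg k q C := RingQuot.mkAlgHom k (ARel k q (incl k C)) (ι k Gen.F)
noncomputable def aK : QSOAlg k q C := RingQuot.mkAlgHom k (ARel k q (incl k C)) (ι k Gen.K)
noncomputable def aK' : QSOAlg k q C := RingQuot.mkAlgHom k (ARel k q (incl k C)) (ι k Gen.K')
noncomputable def aX : QSOAlg k q C := RingQuot.mkAlgHom k (ARel k q (incl k C)) (ι k Gen.X)
noncomputable def aY : QSOAlg k q C := RingQuot.mkAlgHom k (ARel k q (incl k C)) (ι k Gen.Y)

/-- The image of `C₀` in the quantized symplectic oscillator algebra. -/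
noncomputable def aC : QSOAlg k q C := RingQuot.mkAlgHom k (ARel k q (incl k C)) (incl k C)

/-- `K^c` for an arbitrary integer `c`. -/
noncomputable def aKp (c : ℤ) : QSOAlg k q C := aK k q C ^ c.toNat * aK' k q C ^ (-c).toNat

/-- The canonical algebra map `U_q(sl₂) → A`. -/
noncomputable def φ : Uq k q →ₐ[k] QSOAlg k q C :=
  RingQuot.liftAlgHom k (s := UqRel k q)
    ⟨FreeAlgebra.lift k (fun g => match g with
        | GenU.E => aE k q C
        | GenU.F => aF k q C
        | GenU.K => aK k q C
        | GenU.K' => aK' k q C), by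
      intro x y h
      cases h with
      | KK' => simpa only [map_mul, map_one, AlgHom.commutes, FreeAlgebra.lift_ι_apply, aE, aF, aK, aK'] using
          RingQuot.mkAlgHom_rel k (ARel.KK' (k := k) (q := q) (Cl := incl k C))
      | K'K => simpa only [map_mul, map_one, AlgHom.commutes, FreeAlgebra.lift_ι_apply, aE, aF, aK, aK'] using
          RingQuot.mkAlgHom_rel k (ARel.K'K (k := k) (q := q) (Cl := incl k C))
      | KE => simpa only [map_mul, AlgHom.commutes, FreeAlgebra.lift_ι_apply, aE, aF, aK, aK'] using
          RingQuot.mkAlgHom_rel k (ARel.KE (k := k) (q := q) (Cl := incl k C))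
      | KF => simpa only [map_mul, AlgHom.commutes, FreeAlgebra.lift_ι_apply, aE, aF, aK, aK'] using
          RingQuot.mkAlgHom_rel k (ARel.KF (k := k) (q := q) (Cl := incl k C))
      | EF => simpa only [map_mul, map_sub, AlgHom.commutes, FreeAlgebra.lift_ι_apply, aE, aF, aK, aK'] using
          RingQuot.mkAlgHom_rel k (ARel.EF (k := k) (q := q) (Cl := incl k C))⟩

/-- The quantity `⟨a⟩ = (a - a⁻¹)/(q - q⁻¹)`. -/
noncomputable def br (a : k) : k := (a - a⁻¹) / (q - q⁻¹)

/-- The fundamental constant `α_{r,m}` (an empty sum, hence `0`, for `m ≤ 1`). -/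
noncomputable def alph (c₀ : k → k) (r : k) (m : ℕ) : k :=
  ∑ j ∈ Finset.range (m - 1), br k q (q ^ ((1 : ℤ) - (j : ℤ)) * r) * c₀ (q ^ (-(j : ℤ)) * r)

/-- `α_{r,m}` for an integer index `m` (zero for `m ≤ 1`). -/
noncomputable def alphZ (c₀ : k → k) (r : k) (m : ℤ) : k := alph k q c₀ r m.toNat

/-- The constant `d_{r,m}`. -/
noncomputable def dd (c₀ : k → k) (r : k) (m : ℕ) : k :=
  alph k q c₀ r m / (br k q (q ^ ((2 : ℤ) - (m : ℤ)) * r) * br k q (q ^ ((3 : ℤ) - (m : ℤ)) * r))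

/-- The left ideal defining the Verma module `Z(r)` of `A`. -/
noncomputable def vermaIdeal (r : k) : Submodule (QSOAlg k q C) (QSOAlg k q C) :=
  Submodule.span (QSOAlg k q C) {aE k q C, aX k q C, aK k q C - algebraMap k (QSOAlg k q C) r}

/-- The Verma module `Z(r)` over `A`. -/
abbrev Verma (r : k) := QSOAlg k q C ⧸ vermaIdeal k q C r

/-- The highest weight vector `v_r ∈ Z(r)`. -/
noncomputable def hwVec (r : k) : Verma k q C r := Submodule.Quotient.mk 1

/-- The left ideal defining the Verma module `Z_C(t)` of `U_q(sl₂)`. -/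
noncomputable def vermaIdealC (t : k) : Submodule (Uq k q) (Uq k q) :=
  Submodule.span (Uq k q) {uE k q, uK k q - algebraMap k (Uq k q) t}

/-- The Verma module `Z_C(t)` over `U_q(sl₂)`. -/
abbrev VermaC (t : k) := Uq k q ⧸ vermaIdealC k q t

/-- The highest weight vector of `Z_C(t)`. -/
noncomputable def hwVecC (t : k) : VermaC k q t := Submodule.Quotient.mk 1

/-- The structure vectors `v_{t_n}` in a standard cyclic module generated by `v`. -/
noncomputable def svec {M : Type} [AddCommGroup M] [Module (QSOAlg k q C) M]
    (v : M) (c₀ : k → k) (r : k) : ℕ → M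
  | 0 => v
  | 1 => aY k q C • v
  | (n + 2) => aY k q C • svec v c₀ r (n + 1) +
      algebraMap k (QSOAlg k q C) (dd k q c₀ r (n + 2)) • svec v c₀ r n

/-- The (unique) maximal proper submodule `W(r)` of the Verma module `Z(r)`. -/
noncomputable def radVerma (r : k) : Submodule (QSOAlg k q C) (Verma k q C r) :=
  sSup {N | N ≠ ⊤}

/-- The simple highest weight module `V(r) = Z(r)/W(r)`. -/
abbrev simpleQuot (r : k) := Verma k q C r ⧸ radVerma k q C r

/-- The (unique) maximal proper submodule of the `U_q(sl₂)`-Verma module `Z_C(t)`. -/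
noncomputable def radVermaC (t : k) : Submodule (Uq k q) (VermaC k q t) :=
  sSup {N | N ≠ ⊤}

/-- The simple highest weight `U_q(sl₂)`-module `V_C(t)`. -/
abbrev simpleQuotC (t : k) := VermaC k q t ⧸ radVermaC k q t

/-- `V(t)` is a composition factor (i.e. a subquotient) of `Z(s)`. -/
def IsCompFactor (t s : k) : Prop :=
  ∃ P Q : Submodule (QSOAlg k q C) (Verma k q C s), P ≤ Q ∧
    Nonempty ((↥Q ⧸ Submodule.comap Q.subtype P) ≃ₗ[QSOAlg k q C] simpleQuot k q C t)

/-- Adjacency: `t` and `s` are linked if `V(t)` is a composition factor of `Z(s)` or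
vice versa. -/
def Adj (t s : k) : Prop := IsCompFactor k q C t s ∨ IsCompFactor k q C s t

/-- The block `T(r)`: the connected component of `r` in the graph given by `Adj`. -/
def Tset (r : k) : Set k := {t | Relation.ReflTransGen (Adj k q C) r t}

/-- The PBW monomials `F^a Y^b K^c X^d E^e`. -/
noncomputable def pbwMono (p : ℕ × ℕ × ℤ × ℕ × ℕ) : QSOAlg k q C :=
  aF k q C ^ p.1 * aY k q C ^ p.2.1 * aKp k q C p.2.2.1 * aX k q C ^ p.2.2.2.1 *
    aE k q C ^ p.2.2.2.2



-- ===== auxiliary development =====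
section Aux
variable {k : Type} [Field k]

section coefs
variable (q : k)

noncomputable def dq (n : ℕ) : k := (q ^ n - q⁻¹ ^ n) / ((q - q⁻¹) * (q - q⁻¹))

@[simp] lemma dq_zero : dq q 0 = 0 := by simp [dq]

lemma key1 (hq0 : q ≠ 0) (hw : q - q⁻¹ ≠ 0) (n : ℕ) :
    dq q (n+1) * q * q⁻¹ ^ (n+1) - dq q n * q * q⁻¹ ^ n = (q - q⁻¹)⁻¹ * q⁻¹ ^ (2*n) := by
  have hx : q ^ n ≠ 0 := pow_ne_zero _ hq0
  have hnum : (q^(n+1) - q⁻¹^(n+1)) * q * q⁻¹^(n+1) - (q^n - q⁻¹^n) * q * q⁻¹^n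
      = (q - q⁻¹) * q⁻¹^(2*n) := by
    simp only [pow_succ, inv_pow, pow_mul']
    generalize q ^ n = x at hx ⊢
    field_simp
    ring
  simp only [dq]
  rw [div_mul_eq_mul_div, div_mul_eq_mul_div, div_mul_eq_mul_div, div_mul_eq_mul_div,
    div_sub_div_same, hnum, mul_div_mul_left _ _ hw, div_eq_inv_mul]

lemma key2 (hq0 : q ≠ 0) (hw : q - q⁻¹ ≠ 0) (n : ℕ) :
    dq q (n+1) * q⁻¹ * q ^ (n+1) - dq q n * q⁻¹ * q ^ n = (q - q⁻¹)⁻¹ * q ^ (2*n) := by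
  have hx : q ^ n ≠ 0 := pow_ne_zero _ hq0
  have hnum : (q^(n+1) - q⁻¹^(n+1)) * q⁻¹ * q^(n+1) - (q^n - q⁻¹^n) * q⁻¹ * q^n
      = (q - q⁻¹) * q^(2*n) := by
    simp only [pow_succ, inv_pow, pow_mul']
    generalize q ^ n = x at hx ⊢
    field_simp
    ring
  simp only [dq]
  rw [div_mul_eq_mul_div, div_mul_eq_mul_div, div_mul_eq_mul_div, div_mul_eq_mul_div,
    div_sub_div_same, hnum, mul_div_mul_left _ _ hw, div_eq_inv_mul]

end coefs

section rep
variable (q : k) (A : Type) [CommRing A] [Algebra k A] (t u : A)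

noncomputable def ccoef (n : ℕ) : A :=
  algebraMap k A (dq q n * q * q⁻¹ ^ n) * t - algebraMap k A (dq q n * q⁻¹ * q ^ n) * u

noncomputable def kcoef (n : ℕ) : A := algebraMap k A (q⁻¹ ^ (2 * n)) * t
noncomputable def kcoef' (n : ℕ) : A := algebraMap k A (q ^ (2 * n)) * u

@[simp] lemma ccoef_zero : ccoef q A t u 0 = 0 := by simp [ccoef]

lemma ccoef_sub (hq0 : q ≠ 0) (hw : q - q⁻¹ ≠ 0) (n : ℕ) :
    ccoef q A t u (n+1) - ccoef q A t u n =
      algebraMap k A ((q - q⁻¹)⁻¹) * (kcoef q A t n - kcoef' q A u n) := by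
  simp only [ccoef, kcoef, kcoef']
  rw [show ∀ a b c d : A, a - b - (c - d) = (a - c) - (b - d) by intros; ring,
    ← sub_mul, ← sub_mul, ← map_sub, ← map_sub, key1 q hq0 hw n, key2 q hq0 hw n]
  rw [map_mul, map_mul]
  ring

lemma kcoef_mul_kcoef' (hq0 : q ≠ 0) (htu : t * u = 1) (n : ℕ) :
    kcoef q A t n * kcoef' q A u n = 1 := by
  simp only [kcoef, kcoef']
  rw [show ∀ a b c d : A, a * b * (c * d) = (a * c) * (b * d) by intros; ring,
    ← map_mul, htu, mul_one, inv_pow, inv_mul_cancel₀ (pow_ne_zero _ hq0), map_one]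

lemma kcoef_pred (hq0 : q ≠ 0) (n : ℕ) :
    kcoef q A t n = algebraMap k A (q ^ 2) * kcoef q A t (n+1) := by
  have hs : (q : k)⁻¹ ^ (2*n) = q ^ 2 * q⁻¹ ^ (2*(n+1)) := by
    have h2 : (q : k) ^ (2*n) ≠ 0 := pow_ne_zero _ hq0
    rw [show 2*(n+1) = 2*n + 2 by ring, pow_add, inv_pow, inv_pow]
    field_simp
  simp only [kcoef, ← mul_assoc, ← map_mul, ← hs]

lemma kcoef_succ (n : ℕ) :
    kcoef q A t (n+1) = algebraMap k A (q⁻¹ ^ 2) * kcoef q A t n := by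
  simp only [kcoef, ← mul_assoc, ← map_mul]
  congr 1
  rw [show 2*(n+1) = 2*n + 2 by ring, pow_add]
  ring

noncomputable def opE : (ℕ →₀ A) →ₗ[A] (ℕ →₀ A) :=
  Finsupp.lsum A fun n => ccoef q A t u n • Finsupp.lsingle (n - 1)
noncomputable def opF : (ℕ →₀ A) →ₗ[A] (ℕ →₀ A) :=
  Finsupp.lsum A fun n => Finsupp.lsingle (n + 1)
noncomputable def opK : (ℕ →₀ A) →ₗ[A] (ℕ →₀ A) :=
  Finsupp.lsum A fun n => kcoef q A t n • Finsupp.lsingle n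
noncomputable def opK' : (ℕ →₀ A) →ₗ[A] (ℕ →₀ A) :=
  Finsupp.lsum A fun n => kcoef' q A u n • Finsupp.lsingle n

@[simp] lemma opE_single (n : ℕ) (a : A) :
    opE q A t u (Finsupp.single n a) = Finsupp.single (n-1) (ccoef q A t u n * a) := by
  simp [opE, Finsupp.smul_single, smul_eq_mul]

@[simp] lemma opF_single (n : ℕ) (a : A) :
    opF A (Finsupp.single n a) = Finsupp.single (n+1) a := by
  simp [opF]

@[simp] lemma opK_single (n : ℕ) (a : A) :
    opK q A t (Finsupp.single n a) = Finsupp.single n (kcoef q A t n * a) := by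
  simp [opK, Finsupp.smul_single, smul_eq_mul]

@[simp] lemma opK'_single (n : ℕ) (a : A) :
    opK' q A u (Finsupp.single n a) = Finsupp.single n (kcoef' q A u n * a) := by
  simp [opK', Finsupp.smul_single, smul_eq_mul]

/-- generators of the representation -/
noncomputable def rgen : GenU → Module.End k (ℕ →₀ A)
  | GenU.E => (opE q A t u).restrictScalars k
  | GenU.F => (opF A).restrictScalars k
  | GenU.K => (opK q A t).restrictScalars k
  | GenU.K' => (opK' q A u).restrictScalars k

lemma rgen_rel (hq0 : q ≠ 0) (hw : q - q⁻¹ ≠ 0) (htu : t * u = 1) :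
    ∀ ⦃x y : FreeAlgebra k GenU⦄, UqRel k q x y →
      FreeAlgebra.lift k (rgen q A t u) x = FreeAlgebra.lift k (rgen q A t u) y := by
  intro x y h
  cases h with
  | KK' =>
    simp only [map_mul, map_one, FreeAlgebra.lift_ι_apply, rgen]
    refine Finsupp.lhom_ext fun n b => ?_
    simp only [Module.End.mul_apply, LinearMap.coe_restrictScalars, Module.End.one_apply,
      opK_single, opK'_single, ← mul_assoc, kcoef_mul_kcoef' q A t u hq0 htu, one_mul]
  | K'K =>
    simp only [map_mul, map_one, FreeAlgebra.lift_ι_apply, rgen]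
    refine Finsupp.lhom_ext fun n b => ?_
    have h2 : kcoef' q A u n * kcoef q A t n = 1 := by
      rw [mul_comm]; exact kcoef_mul_kcoef' q A t u hq0 htu n
    simp only [Module.End.mul_apply, LinearMap.coe_restrictScalars, Module.End.one_apply,
      opK_single, opK'_single, ← mul_assoc, h2, one_mul]
  | KE =>
    simp only [map_mul, FreeAlgebra.lift_ι_apply, AlgHom.commutes, rgen]
    refine Finsupp.lhom_ext fun n b => ?_
    simp only [Module.End.mul_apply, LinearMap.coe_restrictScalars, opE_single, opK_single,
      Module.algebraMap_end_apply, Finsupp.smul_single]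
    cases n with
    | zero => simp
    | succ m =>
      simp only [Nat.add_sub_cancel]
      congr 1
      rw [Algebra.smul_def, kcoef_pred q A t hq0 m]
      ring
  | KF =>
    simp only [map_mul, FreeAlgebra.lift_ι_apply, AlgHom.commutes, rgen]
    refine Finsupp.lhom_ext fun n b => ?_
    simp only [Module.End.mul_apply, LinearMap.coe_restrictScalars, opF_single, opK_single,
      Module.algebraMap_end_apply, Finsupp.smul_single]
    congr 1
    rw [Algebra.smul_def, kcoef_succ q A t n]
    ring
  | EF =>
    simp only [map_mul, map_sub, FreeAlgebra.lift_ι_apply, AlgHom.commutes, rgen]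
    refine Finsupp.lhom_ext fun n b => ?_
    simp only [LinearMap.sub_apply, Module.End.mul_apply, LinearMap.coe_restrictScalars,
      opE_single, opF_single, opK_single, opK'_single, Module.algebraMap_end_apply,
      Nat.add_sub_cancel]
    cases n with
    | zero =>
      simp only [ccoef_zero, zero_mul, Finsupp.single_zero, sub_zero, Nat.zero_eq]
      rw [← Finsupp.single_sub, Finsupp.smul_single, ← sub_mul, Algebra.smul_def]
      have h0 := ccoef_sub q A t u hq0 hw 0
      rw [ccoef_zero, sub_zero] at h0
      rw [h0]
      ring_nf
    | succ m =>
      simp only [Nat.succ_sub_one]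
      rw [← Finsupp.single_sub, ← Finsupp.single_sub, ← sub_mul, ← sub_mul,
        Finsupp.smul_single, Algebra.smul_def, ccoef_sub q A t u hq0 hw (m+1)]
      ring_nf
end rep
end Aux

section Aux2
variable {k : Type} [Field k] (q : k) (A : Type) [CommRing A] [Algebra k A] (t u : A)
variable (hq0 : q ≠ 0) (hw : q - q⁻¹ ≠ 0) (htu : t * u = 1)

/-- The Verma-type representation of `U_q(sl₂)` on `ℕ →₀ A` with highest weight `t`. -/
noncomputable def rho : Uq k q →ₐ[k] Module.End k (ℕ →₀ A) :=
  RingQuot.liftAlgHom k ⟨FreeAlgebra.lift k (rgen q A t u), rgen_rel q A t u hq0 hw htu⟩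

lemma rho_mk (x : FreeAlgebra k GenU) :
    rho q A t u hq0 hw htu (RingQuot.mkAlgHom k (UqRel k q) x) =
      FreeAlgebra.lift k (rgen q A t u) x := by
  simp [rho, RingQuot.liftAlgHom_mkAlgHom_apply]

lemma rho_uE_single (n : ℕ) (a : A) :
    rho q A t u hq0 hw htu (uE k q) (Finsupp.single n a) =
      Finsupp.single (n-1) (ccoef q A t u n * a) := by
  rw [uE, rho_mk, FreeAlgebra.lift_ι_apply]
  simp [rgen]

lemma rho_uF_single (n : ℕ) (a : A) :
    rho q A t u hq0 hw htu (uF k q) (Finsupp.single n a) = Finsupp.single (n+1) a := by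
  rw [uF, rho_mk, FreeAlgebra.lift_ι_apply]
  simp [rgen]

lemma rho_uK_single (n : ℕ) (a : A) :
    rho q A t u hq0 hw htu (uK k q) (Finsupp.single n a) =
      Finsupp.single n (kcoef q A t n * a) := by
  rw [uK, rho_mk, FreeAlgebra.lift_ι_apply]
  simp [rgen]

lemma rho_uF_pow (n : ℕ) (a : A) :
    rho q A t u hq0 hw htu (uF k q ^ n) (Finsupp.single 0 a) = Finsupp.single n a := by
  induction n with
  | zero => simp
  | succ m ih =>
    rw [pow_succ']
    rw [map_mul, Module.End.mul_apply, ih, rho_uF_single]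

section bchange
variable (B : Type) [CommRing B] [Algebra k B] (s v : B)
variable (hs0 : s * v = 1) (f : A →ₐ[k] B) (hft : f t = s) (hfu : f u = v)

/-- base change map -/
noncomputable def bmap : (ℕ →₀ A) →ₗ[k] (ℕ →₀ B) := Finsupp.mapRange.linearMap f.toLinearMap

@[simp] lemma bmap_single (n : ℕ) (a : A) :
    bmap A B f (Finsupp.single n a) = Finsupp.single n (f a) := by
  simp [bmap]

lemma map_ccoef (hft : f t = s) (hfu : f u = v) (n : ℕ) :
    f (ccoef q A t u n) = ccoef q B s v n := by
  simp only [ccoef, map_sub, map_mul, AlgHom.commutes, hft, hfu]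

lemma map_kcoef (hft : f t = s) (n : ℕ) : f (kcoef q A t n) = kcoef q B s n := by
  simp only [kcoef, map_mul, AlgHom.commutes, hft]

lemma map_kcoef' (hfu : f u = v) (n : ℕ) : f (kcoef' q A u n) = kcoef' q B v n := by
  simp only [kcoef', map_mul, AlgHom.commutes, hfu]

lemma equivar (hft : f t = s) (hfu : f u = v) (w : Uq k q) (y : ℕ →₀ A) :
    bmap A B f (rho q A t u hq0 hw htu w y) =
      rho q B s v hq0 hw hs0 w (bmap A B f y) := by
  obtain ⟨x, rfl⟩ := RingQuot.mkAlgHom_surjective k (UqRel k q) w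
  induction x using FreeAlgebra.induction generalizing y with
  | grade0 r =>
    simp only [AlgHom.commutes, Module.algebraMap_end_apply, map_smul]
  | grade1 g =>
    rw [rho_mk, rho_mk, FreeAlgebra.lift_ι_apply, FreeAlgebra.lift_ι_apply]
    have hcomp : (bmap A B f) ∘ₗ rgen q A t u g = (rgen q B s v g) ∘ₗ (bmap A B f) := by
      cases g <;> refine Finsupp.lhom_ext fun n a => ?_ <;>
        simp only [rgen, LinearMap.coe_comp, Function.comp_apply, LinearMap.coe_restrictScalars,
          opE_single, opF_single, opK_single, opK'_single, bmap_single, map_mul,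
          map_ccoef q A t u B s v f hft hfu, map_kcoef q A t B s f hft,
          map_kcoef' q A u B v f hfu]
    exact LinearMap.congr_fun hcomp y
  | mul a b ha hb =>
    simp only [map_mul, Module.End.mul_apply, hb, ha]
  | add a b ha hb =>
    simp only [map_add, LinearMap.add_apply, map_add, ha, hb]
end bchange

/-- action of a central-character element on a singular vector -/
lemma scalar_eval (C : FreeAlgebra k GenU) (c τ : k) (n : ℕ)
    (hmem : uC k q C - algebraMap k (Uq k q) c ∈ vermaIdealC k q τ)
    (hE : ccoef q A t u n = 0)
    (hK : kcoef q A t n = algebraMap k A τ) :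
    rho q A t u hq0 hw htu (uC k q C) (Finsupp.single n 1) =
      Finsupp.single n (algebraMap k A c) := by
  rw [vermaIdealC] at hmem
  obtain ⟨a, b, hab⟩ := Submodule.mem_span_pair.mp hmem
  have h1 := congrArg (rho q A t u hq0 hw htu) hab
  simp only [smul_eq_mul, map_add, map_mul, map_sub, AlgHom.commutes] at h1
  have h2 := LinearMap.congr_fun h1 (Finsupp.single n (1:A))
  simp only [LinearMap.add_apply, Module.End.mul_apply, LinearMap.sub_apply,
    Module.algebraMap_end_apply] at h2
  rw [rho_uE_single, rho_uK_single, hE, zero_mul, Finsupp.single_zero, map_zero, hK] at h2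
  have hτ : ((algebraMap k A) τ * 1 : A) = τ • (1:A) := by
    rw [mul_one, Algebra.algebraMap_eq_smul_one]
  rw [hτ, Finsupp.smul_single, sub_self, map_zero, zero_add] at h2
  rw [eq_comm, sub_eq_zero] at h2
  rw [h2, Finsupp.smul_single, ← Algebra.algebraMap_eq_smul_one]
end Aux2

section Aux3
variable {k : Type} [Field k]

/-- evaluation of Laurent polynomials at a nonzero point -/
noncomputable def evL (r : k) (hr : r ≠ 0) : LaurentPolynomial k →ₐ[k] k :=
  (AddMonoidAlgebra.lift k k ℤ) ((Units.coeHom k).comp (zpowersHom kˣ (Units.mk0 r hr)))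

lemma evL_apply (r : k) (hr : r ≠ 0) (f : LaurentPolynomial k) :
    evL r hr f = f.coeff.sum (fun i a => a * r ^ i) := by
  rw [evL, AddMonoidAlgebra.lift_apply]
  refine Finsupp.sum_congr fun i _ => ?_
  simp only [MonoidHom.comp_apply, Units.coeHom_apply, zpowersHom_apply, smul_eq_mul]
  rw [Units.val_zpow_eq_zpow_val]
  simp

lemma evL_single (r : k) (hr : r ≠ 0) (i : ℤ) (a : k) :
    evL r hr (AddMonoidAlgebra.single i a) = a * r ^ i := by
  rw [evL_apply, AddMonoidAlgebra.coeff_single, Finsupp.sum_single_index]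
  simp

lemma evL_T (r : k) (hr : r ≠ 0) (n : ℤ) : evL r hr (LaurentPolynomial.T n) = r ^ n := by
  rw [LaurentPolynomial.T, evL_single, one_mul]

lemma pow_injective (q : k) (hq0 : q ≠ 0) (hqru : ∀ n : ℕ, n ≠ 0 → q ^ n ≠ 1) :
    Function.Injective (fun n : ℕ => q ^ n) := by
  have key : ∀ a b : ℕ, a < b → q ^ a ≠ q ^ b := by
    intro a b hab heq
    have h1 : q ^ (b - a) = 1 := by
      rw [pow_sub₀ q hq0 hab.le, heq]
      exact mul_inv_cancel₀ (pow_ne_zero _ hq0)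
    exact hqru (b - a) (Nat.sub_ne_zero_of_lt hab) h1
  intro a b hab
  rcases lt_trichotomy a b with h | h | h
  · exact absurd hab (key a b h)
  · exact h
  · exact absurd hab.symm (key b a h)

lemma laurent_eq_zero (q : k) (hq0 : q ≠ 0) (hqru : ∀ n : ℕ, n ≠ 0 → q ^ n ≠ 1)
    (P : LaurentPolynomial k)
    (h : ∀ n : ℕ, evL (q ^ n) (pow_ne_zero n hq0) P = 0) : P = 0 := by
  obtain ⟨d, p, hp⟩ := LaurentPolynomial.exists_T_pow P
  have hcomp : ∀ (r : k) (hr : r ≠ 0),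
      (evL r hr).comp Polynomial.toLaurentAlg = Polynomial.aeval r := by
    intro r hr
    refine Polynomial.algHom_ext ?_
    rw [AlgHom.comp_apply, Polynomial.toLaurentAlg_apply, Polynomial.toLaurent_X,
      Polynomial.aeval_X, evL_T, zpow_one]
  have hroot : ∀ n : ℕ, p.IsRoot (q ^ n) := by
    intro n
    have h1 : evL (q ^ n) (pow_ne_zero n hq0) (Polynomial.toLaurent p) = 0 := by
      rw [hp, map_mul, h n, zero_mul]
    have h2 := congrArg (fun φ => φ p) (hcomp (q ^ n) (pow_ne_zero n hq0))
    simp only [AlgHom.comp_apply, Polynomial.toLaurentAlg_apply] at h2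
    rw [h1] at h2
    have : Polynomial.aeval (q ^ n) p = Polynomial.eval (q ^ n) p := by
      rw [Polynomial.coe_aeval_eq_eval]
    rw [this] at h2
    exact h2.symm
  have hp0 : p = 0 := by
    refine Polynomial.eq_zero_of_infinite_isRoot p ?_
    exact Set.infinite_of_injective_forall_mem (pow_injective q hq0 hqru) hroot
  have : Polynomial.toLaurent p = 0 := by rw [hp0, map_zero]
  rw [hp] at this
  calc P = P * LaurentPolynomial.T (d : ℤ) * LaurentPolynomial.T (-(d : ℤ)) := by
        rw [mul_assoc, ← LaurentPolynomial.T_add, add_neg_cancel, LaurentPolynomial.T_zero,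
          mul_one]
    _ = 0 := by rw [this, zero_mul]

end Aux3

section Aux4
variable {k : Type} [Field k]

lemma ccoef_singular (q : k) (hq0 : q ≠ 0) (n : ℕ) :
    ccoef q k (q ^ n) (q ^ n)⁻¹ (n + 1) = 0 := by
  have hx : q ^ n ≠ 0 := pow_ne_zero n hq0
  simp only [ccoef, Algebra.algebraMap_self_apply, inv_pow]
  field_simp
  ring

lemma zpow_aux (q : k) (hq0 : q ≠ 0) (n : ℕ) (i : ℤ) :
    q ^ (-2*i) * (q ^ n : k) ^ (-i) = ((q ^ (n+2) : k)⁻¹) ^ i := by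
  rw [show ((q ^ (n+2) : k)⁻¹) = q ^ (-((n : ℤ) + 2)) by
      rw [← zpow_natCast q (n+2), ← zpow_neg]
      norm_cast,
    ← zpow_natCast q n, ← zpow_mul, ← zpow_add₀ hq0, ← zpow_mul]
  congr 1
  push_cast
  ring

lemma central_char (q : k) (hq0 : q ≠ 0) (hw : q - q⁻¹ ≠ 0)
    (hqru : ∀ n : ℕ, n ≠ 0 → q ^ n ≠ 1)
    (C : FreeAlgebra k GenU) (hC : uC k q C ∈ Subalgebra.center k (Uq k q))
    (c₀ : k → k)
    (hmem : ∀ t : k, t ≠ 0 → uC k q C - algebraMap k (Uq k q) (c₀ t) ∈ vermaIdealC k q t) :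
    ∃ L : LaurentPolynomial k,
      (∀ t : k, t ≠ 0 → c₀ t = L.coeff.sum (fun i a => a * t ^ i)) ∧
      L.coeff (-1) * q = L.coeff 1 * q⁻¹ := by
  have htuR : (LaurentPolynomial.T 1 : LaurentPolynomial k) * LaurentPolynomial.T (-1) = 1 := by
    rw [← LaurentPolynomial.T_add]
    norm_num
  set L : LaurentPolynomial k :=
    (rho q (LaurentPolynomial k) (LaurentPolynomial.T 1) (LaurentPolynomial.T (-1)) hq0 hw htuR
      (uC k q C) (Finsupp.single 0 1)) 0 with hLdef
  have hscalar : ∀ (τ : k) (hτ : τ ≠ 0),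
      rho q k τ τ⁻¹ hq0 hw (mul_inv_cancel₀ hτ) (uC k q C) (Finsupp.single 0 1)
        = Finsupp.single 0 (c₀ τ) := by
    intro τ hτ
    have h := scalar_eval q k τ τ⁻¹ hq0 hw (mul_inv_cancel₀ hτ) C (c₀ τ) τ 0 (hmem τ hτ)
      (ccoef_zero q k τ τ⁻¹) (by simp [kcoef])
    simpa using h
  have hevL : ∀ (τ : k) (hτ : τ ≠ 0), c₀ τ = evL τ hτ L := by
    intro τ hτ
    have hT1 : evL τ hτ (LaurentPolynomial.T 1) = τ := by rw [evL_T, zpow_one]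
    have hTm1 : evL τ hτ (LaurentPolynomial.T (-1)) = τ⁻¹ := by
      rw [evL_T, zpow_neg, zpow_one]
    have he := equivar q (LaurentPolynomial k) (LaurentPolynomial.T 1) (LaurentPolynomial.T (-1))
      hq0 hw htuR k τ τ⁻¹ (mul_inv_cancel₀ hτ) (evL τ hτ) hT1 hTm1 (uC k q C)
      (Finsupp.single 0 1)
    rw [bmap_single, map_one, hscalar τ hτ] at he
    have h0 := congrArg (fun v : ℕ →₀ k => v 0) he
    simpa [bmap, Finsupp.mapRange_apply, hLdef] using h0.symm
  have hsymc : ∀ n : ℕ, c₀ (q ^ n) = c₀ ((q ^ (n+2))⁻¹) := by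
    intro n
    have hτ : (q ^ n : k) ≠ 0 := pow_ne_zero n hq0
    have hτ' : ((q ^ (n+2) : k)⁻¹) ≠ 0 := inv_ne_zero (pow_ne_zero _ hq0)
    have hK : kcoef q k (q ^ n) (n+1) = algebraMap k k ((q ^ (n+2) : k)⁻¹) := by
      simp only [kcoef, Algebra.algebraMap_self_apply, inv_pow]
      rw [show 2*(n+1) = n + (n+2) by ring, pow_add, mul_inv]
      field_simp
    have h1 := scalar_eval q k (q ^ n) (q ^ n)⁻¹ hq0 hw (mul_inv_cancel₀ hτ) C
      (c₀ ((q ^ (n+2))⁻¹)) ((q ^ (n+2))⁻¹) (n+1) (hmem _ hτ')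
      (ccoef_singular q hq0 n) hK
    have hcomm : uF k q ^ (n+1) * uC k q C = uC k q C * uF k q ^ (n+1) :=
      Subalgebra.mem_center_iff.mp hC _
    have h3 := congrArg (rho q k (q ^ n) (q ^ n)⁻¹ hq0 hw (mul_inv_cancel₀ hτ)) hcomm
    rw [map_mul, map_mul] at h3
    have h4 := LinearMap.congr_fun h3 (Finsupp.single 0 1)
    simp only [Module.End.mul_apply] at h4
    rw [hscalar _ hτ, rho_uF_pow, rho_uF_pow, h1] at h4
    have h5 := congrArg (fun v : ℕ →₀ k => v (n+1)) h4
    simpa [Finsupp.single_eq_same, Algebra.algebraMap_self_apply] using h5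
  set M : LaurentPolynomial k :=
    L.coeff.sum (fun i a => AddMonoidAlgebra.single (-i) (a * q ^ (-2*i : ℤ))) with hMdef
  have hevM : ∀ n : ℕ,
      evL (q ^ n) (pow_ne_zero n hq0) M
        = evL ((q ^ (n+2))⁻¹) (inv_ne_zero (pow_ne_zero _ hq0)) L := by
    intro n
    rw [hMdef, map_finsuppSum, evL_apply]
    refine Finsupp.sum_congr fun i _ => ?_
    rw [evL_single, mul_assoc, zpow_aux q hq0 n i]
  have hvanish : ∀ n : ℕ, evL (q ^ n) (pow_ne_zero n hq0) (L - M) = 0 := by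
    intro n
    rw [map_sub, hevM n, ← hevL _ (pow_ne_zero n hq0),
      ← hevL _ (inv_ne_zero (pow_ne_zero _ hq0)), hsymc n, sub_self]
  have hLM : L = M := sub_eq_zero.mp (laurent_eq_zero q hq0 hqru (L - M) hvanish)
  have hM1 : M.coeff (-1) = L.coeff 1 * q ^ (-2 : ℤ) := by
    rw [hMdef, AddMonoidAlgebra.coeff_finsuppSum, Finsupp.sum_apply, Finsupp.sum]
    rw [Finset.sum_eq_single (1 : ℤ)]
    · rw [AddMonoidAlgebra.coeff_single, Finsupp.single_eq_same]
      norm_num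
    · intro b _ hb
      rw [AddMonoidAlgebra.coeff_single, Finsupp.single_apply, if_neg (by omega)]
    · intro h1
      rw [Finsupp.notMem_support_iff.mp h1, zero_mul, AddMonoidAlgebra.single_zero, AddMonoidAlgebra.coeff_zero, Finsupp.coe_zero,
        Pi.zero_apply]
  refine ⟨L, fun t ht => by rw [hevL t ht, evL_apply], ?_⟩
  have hL1 : L.coeff (-1) = L.coeff 1 * q ^ (-2 : ℤ) := by
    have h6 := hM1
    rw [← hLM] at h6
    exact h6
  rw [hL1, show (q : k) ^ (-2 : ℤ) = (q^2)⁻¹ by rw [zpow_neg]; norm_cast]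
  field_simp
end Aux4

section Aux5
variable {k : Type} [Field k]

lemma zpow_ne_one (q : k) (hq0 : q ≠ 0) (hqru : ∀ n : ℕ, n ≠ 0 → q ^ n ≠ 1)
    (z : ℤ) (hz : z ≠ 0) : q ^ z ≠ 1 := by
  intro h
  rcases lt_trichotomy z 0 with hneg | h0 | hpos
  · have h1 : q ^ (-z) = 1 := by rw [zpow_neg, h, inv_one]
    have h2 : q ^ ((-z).toNat) = 1 := by
      rw [← zpow_natCast q, Int.toNat_of_nonneg (by omega)]
      exact h1
    exact hqru _ (by omega) h2
  · exact hz h0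
  · have h2 : q ^ (z.toNat) = 1 := by
      rw [← zpow_natCast q, Int.toNat_of_nonneg (by omega)]
      exact h
    exact hqru _ (by omega) h2

lemma geom_q (q : k) (hq0 : q ≠ 0) (hqru : ∀ n : ℕ, n ≠ 0 → q ^ n ≠ 1)
    (s : ℤ) (hs : s ≠ 0) (m : ℕ) (hm : 2 ≤ m) :
    ∑ j ∈ Finset.range (m-1), q ^ (-s * (j:ℤ))
      = (q ^ s * ((q ^ m : k)) ^ (-s) - 1) / (q ^ (-s) - 1) := by
  have hy : (q ^ (-s) : k) ≠ 1 := zpow_ne_one q hq0 hqru (-s) (neg_ne_zero.mpr hs)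
  have hsum : ∀ j ∈ Finset.range (m-1), q ^ (-s * (j:ℤ)) = (q ^ (-s)) ^ j := by
    intro j _
    rw [zpow_mul, zpow_natCast]
  rw [Finset.sum_congr rfl hsum, geom_sum_eq hy]
  congr 1
  rw [← zpow_natCast (q ^ (-s)) (m-1), ← zpow_mul, ← zpow_natCast q m, ← zpow_mul,
    ← zpow_add₀ hq0]
  congr 1
  have hc : ((m - 1 : ℕ) : ℤ) = (m:ℤ) - 1 := by omega
  rw [hc]
  ring

/-- monomial building block of the polynomial `b` -/
noncomputable def monoP (q : k) (N : ℕ) (s : ℤ) : MvPolynomial (Fin 2) k :=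
  if s = 0 then 0 else
    MvPolynomial.C ((q ^ (-s) - 1)⁻¹) *
      (MvPolynomial.C (q ^ s) * MvPolynomial.X 0 ^ ((N:ℤ) + s).toNat *
          MvPolynomial.X 1 ^ ((N:ℤ) - s).toNat
        - MvPolynomial.X 0 ^ ((N:ℤ) + s).toNat * MvPolynomial.X 1 ^ N)

lemma monoP_zero (q : k) (N : ℕ) : monoP q N 0 = 0 := if_pos rfl

lemma monoP_eval (q r X : k) (hq0 : q ≠ 0) (hr : r ≠ 0) (hX : X ≠ 0)
    (N : ℕ) (s : ℤ) (hs1 : s.natAbs ≤ N) (hs : s ≠ 0) (hqs : q ^ (-s) - 1 ≠ 0) :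
    ((X * r)⁻¹) ^ N * MvPolynomial.eval ![r, X] (monoP q N s)
      = r ^ s * ((q ^ s * X ^ (-s) - 1) / (q ^ (-s) - 1)) := by
  have ha : ((((N:ℤ) + s).toNat : ℕ) : ℤ) = (N:ℤ) + s := Int.toNat_of_nonneg (by omega)
  have hb : ((((N:ℤ) - s).toNat : ℕ) : ℤ) = (N:ℤ) - s := Int.toNat_of_nonneg (by omega)
  rw [monoP, if_neg hs]
  simp only [map_mul, map_sub, MvPolynomial.eval_C, MvPolynomial.eval_mul, MvPolynomial.eval_sub,
    MvPolynomial.eval_pow, MvPolynomial.eval_X, Matrix.cons_val_zero, Matrix.cons_val_one,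
    Matrix.head_cons]
  rw [mul_inv, mul_pow, inv_pow, inv_pow, ← zpow_natCast X N, ← zpow_natCast r N,
    ← zpow_natCast r (((N:ℤ) + s).toNat), ← zpow_natCast X (((N:ℤ) - s).toNat), ha, hb]
  rw [show ((N:ℤ) + s) = s + (N:ℤ) by ring, zpow_add₀ hr,
    show ((N:ℤ) - s) = -s + (N:ℤ) by ring, zpow_add₀ hX]
  have h1 : X ^ (N:ℤ) ≠ 0 := zpow_ne_zero _ hX
  have h2 : r ^ (N:ℤ) ≠ 0 := zpow_ne_zero _ hr
  have hqs' : (-1 + ((q:k) ^ s)⁻¹) ≠ 0 := by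
    intro h
    apply hqs
    rw [zpow_neg]
    linear_combination h
  have hd : (1/(q:k)^s - 1) ≠ 0 := by
    intro h
    apply hqs'
    rw [one_div] at h
    linear_combination h
  field_simp

lemma alph_poly (q : k) (hq0 : q ≠ 0) (hw : q - q⁻¹ ≠ 0)
    (hqru : ∀ n : ℕ, n ≠ 0 → q ^ n ≠ 1)
    (c₀ : k → k) (L : LaurentPolynomial k)
    (hevL : ∀ t : k, t ≠ 0 → c₀ t = L.coeff.sum (fun i a => a * t ^ i))
    (hsym : L.coeff (-1) * q = L.coeff 1 * q⁻¹) :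
    ∃ N : ℕ, 0 < N ∧ ∃ b : MvPolynomial (Fin 2) k,
      ∀ r : k, r ≠ 0 → ∀ m : ℕ, 2 ≤ m →
        alph k q c₀ r m = ((q ^ m * r)⁻¹) ^ N * MvPolynomial.eval ![r, q ^ m] b := by
  classical
  set N := L.coeff.support.sup (fun i => i.natAbs) + 2 with hNdef
  have hNi : ∀ i ∈ L.coeff.support, i.natAbs + 2 ≤ N := fun i hi =>
    Nat.add_le_add_right (Finset.le_sup (f := fun i => i.natAbs) hi) 2
  refine ⟨N, by omega, ∑ i ∈ L.coeff.support,
    MvPolynomial.C (L.coeff i * (q - q⁻¹)⁻¹) *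
      (MvPolynomial.C q * monoP q N (i+1) - MvPolynomial.C q⁻¹ * monoP q N (i-1)), ?_⟩
  intro r hr m hm
  have hX0 : (q ^ m : k) ≠ 0 := pow_ne_zero m hq0
  rw [map_sum, Finset.mul_sum, alph]
  have hstep1 : ∀ j ∈ Finset.range (m-1),
      br k q (q ^ ((1:ℤ) - (j:ℤ)) * r) * c₀ (q ^ (-(j:ℤ)) * r)
        = ∑ i ∈ L.coeff.support,
            br k q (q ^ ((1:ℤ) - (j:ℤ)) * r) * (L.coeff i * (q ^ (-(j:ℤ)) * r) ^ i) := by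
    intro j _
    rw [hevL _ (mul_ne_zero (zpow_ne_zero _ hq0) hr), Finsupp.sum, Finset.mul_sum]
  rw [Finset.sum_congr rfl hstep1, Finset.sum_comm]
  have key : ∀ i ∈ L.coeff.support,
      (∑ j ∈ Finset.range (m-1),
        br k q (q ^ ((1:ℤ) - (j:ℤ)) * r) * (L.coeff i * (q ^ (-(j:ℤ)) * r) ^ i))
      = ((q ^ m * r)⁻¹) ^ N *
          MvPolynomial.eval ![r, q ^ m]
            (MvPolynomial.C (L.coeff i * (q - q⁻¹)⁻¹) *
              (MvPolynomial.C q * monoP q N (i+1) - MvPolynomial.C q⁻¹ * monoP q N (i-1)))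
        + ((m - 1 : ℕ) : k) * (q - q⁻¹)⁻¹ *
            ((if i = -1 then L.coeff i * q else 0) - (if i = 1 then L.coeff i * q⁻¹ else 0)) := by
    intro i hi
    have hNi2 := hNi i hi
    have hterm : ∀ j ∈ Finset.range (m-1),
        br k q (q ^ ((1:ℤ) - (j:ℤ)) * r) * (L.coeff i * (q ^ (-(j:ℤ)) * r) ^ i)
          = (L.coeff i * (q - q⁻¹)⁻¹ * (q * r ^ (i+1))) * q ^ (-(i+1) * (j:ℤ))
            - (L.coeff i * (q - q⁻¹)⁻¹ * (q⁻¹ * r ^ (i-1))) * q ^ (-(i-1) * (j:ℤ)) := by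
      intro j _
      have e0 : ((q ^ (-(j:ℤ)) * r : k)) ^ i = q ^ (-((j:ℤ) * i)) * r ^ i := by
        rw [mul_zpow, ← zpow_mul, show (-(j:ℤ)) * i = -((j:ℤ)*i) by ring]
      have e1 : (q:k) ^ ((1:ℤ) - (j:ℤ)) = q * (q ^ ((j:ℤ)):k)⁻¹ := by
        rw [show (1:ℤ) - (j:ℤ) = 1 + (-(j:ℤ)) by ring, zpow_add₀ hq0, zpow_one, zpow_neg]
      have e3 : (q:k) ^ (-(i+1) * (j:ℤ)) = q ^ (-((j:ℤ)*i)) * ((q:k) ^ ((j:ℤ)))⁻¹ := by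
        rw [← zpow_neg q ((j:ℤ)), ← zpow_add₀ hq0]
        congr 1
        ring
      have e4 : (q:k) ^ (-(i-1) * (j:ℤ)) = q ^ (-((j:ℤ)*i)) * (q:k) ^ ((j:ℤ)) := by
        rw [← zpow_add₀ hq0]
        congr 1
        ring
      have e5 : (r:k) ^ (i+1) = r ^ i * r := zpow_add_one₀ hr i
      have e6 : (r:k) ^ (i-1) = r ^ i * r⁻¹ := zpow_sub_one₀ hr i
      rw [br, div_eq_mul_inv, e0, e1, mul_inv, mul_inv, inv_inv, e3, e4, e5, e6]
      ring
    rw [Finset.sum_congr rfl hterm, Finset.sum_sub_distrib, ← Finset.mul_sum, ← Finset.mul_sum]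
    simp only [MvPolynomial.eval_mul, MvPolynomial.eval_C, MvPolynomial.eval_sub]
    by_cases hi1 : i = -1
    · subst hi1
      rw [if_pos rfl, if_neg (by norm_num)]
      rw [show ((-1:ℤ)+1) = 0 by norm_num, show ((-1:ℤ)-1) = -2 by norm_num, monoP_zero,
        map_zero]
      have hsum0 : ∑ j ∈ Finset.range (m-1), (q:k) ^ (-(0:ℤ) * (j:ℤ)) = ((m-1:ℕ) : k) := by
        simp
      rw [hsum0, geom_q q hq0 hqru (-2) (by norm_num) m hm, zpow_zero]
      have h2 := monoP_eval q r (q^m) hq0 hr hX0 N (-2) (by omega) (by norm_num)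
        (sub_ne_zero.mpr (zpow_ne_one q hq0 hqru _ (by norm_num)))
      set P : k := ((q^m * r : k)⁻¹) ^ N with hPdef
      set E2 : k := MvPolynomial.eval ![r, q^m] (monoP q N (-2)) with hE2def
      rw [show P * (L.coeff (-1) * (q - q⁻¹)⁻¹ * (q * 0 - q⁻¹ * E2))
          = -((L.coeff (-1) * (q - q⁻¹)⁻¹ * q⁻¹) * (P * E2)) by ring, h2]
      ring
    · by_cases hi2 : i = 1
      · subst hi2
        rw [if_neg (by norm_num), if_pos rfl]
        rw [show ((1:ℤ)-1) = 0 by norm_num, show ((1:ℤ)+1) = 2 by norm_num, monoP_zero,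
          map_zero]
        have hsum0 : ∑ j ∈ Finset.range (m-1), (q:k) ^ (-(0:ℤ) * (j:ℤ)) = ((m-1:ℕ) : k) := by
          simp
        rw [hsum0, geom_q q hq0 hqru 2 (by norm_num) m hm, zpow_zero]
        have h1 := monoP_eval q r (q^m) hq0 hr hX0 N 2 (by omega) (by norm_num)
          (sub_ne_zero.mpr (zpow_ne_one q hq0 hqru _ (by norm_num)))
        set P : k := ((q^m * r : k)⁻¹) ^ N with hPdef
        set E1 : k := MvPolynomial.eval ![r, q^m] (monoP q N 2) with hE1def
        rw [show P * (L.coeff 1 * (q - q⁻¹)⁻¹ * (q * E1 - q⁻¹ * 0))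
            = (L.coeff 1 * (q - q⁻¹)⁻¹ * q) * (P * E1) by ring, h1]
        ring
      · rw [if_neg hi1, if_neg hi2]
        rw [geom_q q hq0 hqru (i+1) (by omega) m hm, geom_q q hq0 hqru (i-1) (by omega) m hm]
        have h1 := monoP_eval q r (q^m) hq0 hr hX0 N (i+1) (by omega) (by omega)
          (sub_ne_zero.mpr (zpow_ne_one q hq0 hqru _ (by omega)))
        have h2 := monoP_eval q r (q^m) hq0 hr hX0 N (i-1) (by omega) (by omega)
          (sub_ne_zero.mpr (zpow_ne_one q hq0 hqru _ (by omega)))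
        set P : k := ((q^m * r : k)⁻¹) ^ N with hPdef
        set E1 : k := MvPolynomial.eval ![r, q^m] (monoP q N (i+1)) with hE1def
        set E2 : k := MvPolynomial.eval ![r, q^m] (monoP q N (i-1)) with hE2def
        rw [show P * (L.coeff i * (q - q⁻¹)⁻¹ * (q * E1 - q⁻¹ * E2))
            = (L.coeff i * (q - q⁻¹)⁻¹ * q) * (P * E1) - (L.coeff i * (q - q⁻¹)⁻¹ * q⁻¹) * (P * E2)
            by ring, h1, h2]
        ring
  rw [Finset.sum_congr rfl key, Finset.sum_add_distrib]
  have hcorr : (∑ i ∈ L.coeff.support, ((m - 1 : ℕ) : k) * (q - q⁻¹)⁻¹ *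
      ((if i = -1 then L.coeff i * q else 0) - (if i = 1 then L.coeff i * q⁻¹ else 0))) = 0 := by
    have e1 : ∑ i ∈ L.coeff.support, (if i = -1 then L.coeff i * q else 0) = L.coeff (-1) * q := by
      rw [Finset.sum_ite_eq' L.coeff.support (-1) (fun i => L.coeff i * q)]
      by_cases h : (-1 : ℤ) ∈ L.coeff.support
      · rw [if_pos h]
      · rw [if_neg h, Finsupp.notMem_support_iff.mp h, zero_mul]
    have e2 : ∑ i ∈ L.coeff.support, (if i = 1 then L.coeff i * q⁻¹ else 0) = L.coeff 1 * q⁻¹ := by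
      rw [Finset.sum_ite_eq' L.coeff.support (1:ℤ) (fun i => L.coeff i * q⁻¹)]
      by_cases h : (1 : ℤ) ∈ L.coeff.support
      · rw [if_pos h]
      · rw [if_neg h, Finsupp.notMem_support_iff.mp h, zero_mul]
    calc (∑ i ∈ L.coeff.support, ((m - 1 : ℕ) : k) * (q - q⁻¹)⁻¹ *
        ((if i = -1 then L.coeff i * q else 0) - (if i = 1 then L.coeff i * q⁻¹ else 0)))
        = ((m - 1 : ℕ) : k) * (q - q⁻¹)⁻¹ *
            ((∑ i ∈ L.coeff.support, (if i = -1 then L.coeff i * q else 0))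
              - (∑ i ∈ L.coeff.support, (if i = 1 then L.coeff i * q⁻¹ else 0))) := by
          rw [← Finset.sum_sub_distrib, Finset.mul_sum]
      _ = 0 := by rw [e1, e2, hsym, sub_self, mul_zero]
  rw [hcorr, add_zero]
end Aux5


/-- `α_{r,m} = (q^m r)^{-N} b(r, q^m)` for a single polynomial `b` in two variables and a
single positive integer `N`, provided `q` is not a root of unity. -/
theorem alpha_polynomial (k : Type) [Field k] (q : k)
    (hchar : (2 : k) ≠ 0) (hq0 : q ≠ 0) (hq2 : q ^ 2 ≠ 1)
    (hqru : ∀ n : ℕ, n ≠ 0 → q ^ n ≠ 1)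
    (C : FreeAlgebra k GenU) (hC : uC k q C ∈ Subalgebra.center k (Uq k q))
    (c₀ : k → k)
    (hc₀ : ∀ t : k, uC k q C • hwVecC k q t = algebraMap k (Uq k q) (c₀ t) • hwVecC k q t) :
    ∃ N : ℕ, 0 < N ∧ ∃ b : MvPolynomial (Fin 2) k,
      ∀ r : k, r ≠ 0 → ∀ m : ℕ, 2 ≤ m →
        alph k q c₀ r m = ((q ^ m * r)⁻¹) ^ N * MvPolynomial.eval ![r, q ^ m] b := by
  have hw : q - q⁻¹ ≠ 0 := by
    intro h
    apply hq2
    have h1 : q = q⁻¹ := sub_eq_zero.mp h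
    rw [pow_two]
    nth_rewrite 2 [h1]
    exact mul_inv_cancel₀ hq0
  have hmem : ∀ t : k, t ≠ 0 →
      uC k q C - algebraMap k (Uq k q) (c₀ t) ∈ vermaIdealC k q t := by
    intro t ht
    have h := hc₀ t
    rw [hwVecC, ← Submodule.Quotient.mk_smul, ← Submodule.Quotient.mk_smul,
      smul_eq_mul, smul_eq_mul, mul_one, mul_one] at h
    exact (Submodule.Quotient.eq _).mp h
  obtain ⟨L, hevL, hsym⟩ := central_char q hq0 hw hqru C hC c₀ hmem
  exact alph_poly q hq0 hw hqru c₀ L hevL hsym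

end QSO
end

section
/- For every r ∈ k^× and all n, m ∈ ℤ_{≥0}, the following identities hold in the Verma module Z(r): [X, F^n Y^m] v_r = −F^n (Σ_{j=0}^{m−1} q^j Y^j C_0 Y^{m−1−j}) v_r − q^{m+n−1} r^{−1} ⟨q^n⟩ F^{n−1} Y^{m+1} v_r, and [E, F^n Y^m] v_r = −F^n (Σ_{j=0}^{m−2} ⟨q^{j+1}⟩ Y^j C_0 Y^{m−2−j}) v_r + ⟨q^n⟩ ⟨q^{1−m−n} r⟩ F^{n−1} Y^m v_r. -/
open FreeAlgebra DirectSum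

set_option maxSynthPendingDepth 3

namespace QSO

variable (k : Type) [Field k] (q : k)

variable (C : FreeAlgebra k GenU)

section Aux
variable {k : Type} [Field k] {q : k} (C : FreeAlgebra k GenU)

lemma rK'K : aK' k q C * aK k q C = 1 := by
  simpa only [map_mul, map_one, aE, aF, aK, aK', aX, aY, aC] using
    RingQuot.mkAlgHom_rel k (ARel.K'K (k:=k) (q:=q) (Cl := incl k C))

lemma rKK' : aK k q C * aK' k q C = 1 := by
  simpa only [map_mul, map_one, aE, aF, aK, aK', aX, aY, aC] using
    RingQuot.mkAlgHom_rel k (ARel.KK' (k:=k) (q:=q) (Cl := incl k C))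

lemma rEF : aE k q C * aF k q C - aF k q C * aE k q C
    = (q - q⁻¹)⁻¹ • (aK k q C - aK' k q C) := by
  simpa only [map_mul, map_sub, AlgHom.commutes, ← Algebra.smul_def, map_smul, aE, aF, aK, aK', aX, aY, aC] using
    RingQuot.mkAlgHom_rel k (ARel.EF (k:=k) (q:=q) (Cl := incl k C))

lemma rEY : aE k q C * aY k q C = aX k q C + q⁻¹ • (aY k q C * aE k q C) := by
  simpa only [map_mul, map_add, AlgHom.commutes, ← Algebra.smul_def, map_smul, aE, aF, aK, aK', aX, aY, aC] using
    RingQuot.mkAlgHom_rel k (ARel.EY (k:=k) (q:=q) (Cl := incl k C))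

lemma rFX : aF k q C * aX k q C = aY k q C * aK' k q C + aX k q C * aF k q C := by
  simpa only [map_mul, map_add, aE, aF, aK, aK', aX, aY, aC] using
    RingQuot.mkAlgHom_rel k (ARel.FX (k:=k) (q:=q) (Cl := incl k C))

lemma rFY : aF k q C * aY k q C = aY k q C * aF k q C := by
  simpa only [map_mul, aE, aF, aK, aK', aX, aY, aC] using
    RingQuot.mkAlgHom_rel k (ARel.FY (k:=k) (q:=q) (Cl := incl k C))

lemma rKF : aK k q C * aF k q C = (q⁻¹ ^ 2) • (aF k q C * aK k q C) := by
  simpa only [map_mul, AlgHom.commutes, ← Algebra.smul_def, map_smul, aE, aF, aK, aK', aX, aY, aC] using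
    RingQuot.mkAlgHom_rel k (ARel.KF (k:=k) (q:=q) (Cl := incl k C))

lemma rKY : aK k q C * aY k q C = q⁻¹ • (aY k q C * aK k q C) := by
  simpa only [map_mul, AlgHom.commutes, ← Algebra.smul_def, map_smul, aE, aF, aK, aK', aX, aY, aC] using
    RingQuot.mkAlgHom_rel k (ARel.KY (k:=k) (q:=q) (Cl := incl k C))

lemma rYX : q • (aY k q C * aX k q C) - aX k q C * aY k q C = aC k q C := by
  simpa only [map_mul, map_sub, AlgHom.commutes, ← Algebra.smul_def, map_smul, aE, aF, aK, aK', aX, aY, aC] using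
    RingQuot.mkAlgHom_rel k (ARel.YX (k:=k) (q:=q) (Cl := incl k C))

lemma rXY : aX k q C * aY k q C = q • (aY k q C * aX k q C) - aC k q C := by
  rw [← rYX]; abel

/-- generic: `K' a = c⁻¹ • (a K')` from `K a = c • (a K)`. -/
lemma K'_comm (a : QSOAlg k q C) (c : k) (hc : c ≠ 0)
    (h : aK k q C * a = c • (a * aK k q C)) :
    aK' k q C * a = c⁻¹ • (a * aK' k q C) := by
  have A : aK' k q C * ((aK k q C * a) * aK' k q C) = a * aK' k q C := by
    rw [← mul_assoc, ← mul_assoc, rK'K, one_mul]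
  rw [h, smul_mul_assoc, mul_smul_comm, mul_assoc, rKK', mul_one] at A
  rw [← A, smul_smul, inv_mul_cancel₀ hc, one_smul]

lemma rK'Y (hq0 : q ≠ 0) : aK' k q C * aY k q C = q • (aY k q C * aK' k q C) := by
  have := K'_comm C (aY k q C) q⁻¹ (inv_ne_zero hq0) (rKY C)
  simpa using this

lemma rK'F (hq0 : q ≠ 0) : aK' k q C * aF k q C = (q ^ 2) • (aF k q C * aK' k q C) := by
  have := K'_comm C (aF k q C) (q⁻¹ ^ 2) (pow_ne_zero _ (inv_ne_zero hq0)) (rKF C)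
  simpa using this

/-- generic commutation of `x` past powers. -/
lemma pow_comm_smul {A : Type*} [Ring A] [Algebra k A] (x a : A) (c : k)
    (h : x * a = c • (a * x)) (m : ℕ) : x * a ^ m = c ^ m • (a ^ m * x) := by
  induction m with
  | zero => simp
  | succ m ih =>
    calc x * a ^ (m + 1) = (x * a ^ m) * a := by rw [pow_succ, mul_assoc]
      _ = (c ^ m • (a ^ m * x)) * a := by rw [ih]
      _ = c ^ m • (a ^ m * (x * a)) := by rw [smul_mul_assoc, mul_assoc]
      _ = c ^ m • (a ^ m * (c • (a * x))) := by rw [h]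
      _ = (c ^ m * c) • ((a ^ m * a) * x) := by
            rw [mul_smul_comm, smul_smul, mul_assoc]
      _ = c ^ (m + 1) • (a ^ (m + 1) * x) := by rw [pow_succ, pow_succ]

end Aux
section Aux2
variable {k : Type} [Field k]

/-- scalar geometric sums -/
noncomputable def csum (q : k) (n : ℕ) : k := ∑ j ∈ Finset.range n, (q ^ 2) ^ j
noncomputable def dsum (q : k) (n : ℕ) : k := ∑ j ∈ Finset.range n, (q⁻¹ ^ 2) ^ j

variable {q : k} (C : FreeAlgebra k GenU)

lemma csum_succ (n : ℕ) : csum q (n + 1) = q ^ 2 * csum q n + 1 := by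
  simp only [csum, geom_sum_succ]
lemma dsum_succ (n : ℕ) : dsum q (n + 1) = q⁻¹ ^ 2 * dsum q n + 1 := by
  simp only [dsum, geom_sum_succ]
lemma csum_one : csum q 1 = 1 := by simp [csum]
lemma dsum_one : dsum q 1 = 1 := by simp [dsum]

lemma br_one : br k q 1 = 0 := by simp [br]

lemma br_pow_one (hqq : q - q⁻¹ ≠ 0) : br k q (q ^ 1) = 1 := by
  simp [br, div_self hqq]

lemma br_succ (hq0 : q ≠ 0) (hqq : q - q⁻¹ ≠ 0) (m : ℕ) :
    br k q (q ^ (m + 1)) = q⁻¹ ^ m + q * br k q (q ^ m) := by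
  have hpm : q ^ m ≠ 0 := pow_ne_zero _ hq0
  have h : (q ^ (m+1) - (q ^ (m+1))⁻¹)
      = q⁻¹ ^ m * (q - q⁻¹) + (q * (q ^ m - (q ^ m)⁻¹)) := by
    rw [pow_succ, mul_inv, ← inv_pow]
    ring
  rw [br, br, h, add_div, mul_div_cancel_right₀ _ hqq, mul_div_assoc]

/-- `X Y^m` commutation: the `C`-sum. -/
noncomputable def Sx (q : k) (C : FreeAlgebra k GenU) (m : ℕ) : QSOAlg k q C :=
  ∑ j ∈ Finset.range m, q ^ j • (aY k q C ^ j * (aC k q C * aY k q C ^ (m - 1 - j)))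

lemma Sx_succ (m : ℕ) :
    Sx q C (m + 1) = Sx q C m * aY k q C + q ^ m • (aY k q C ^ m * aC k q C) := by
  rw [Sx, Sx, Finset.sum_range_succ, Finset.sum_mul]
  congr 1
  · refine Finset.sum_congr rfl fun j hj => ?_
    have hj' : j < m := Finset.mem_range.mp hj
    have h1 : m - 1 - j + 1 = m + 1 - 1 - j := by omega
    rw [smul_mul_assoc, mul_assoc, mul_assoc, ← pow_succ, h1]
  · simp

lemma pXY (m : ℕ) : aX k q C * aY k q C ^ m
    = q ^ m • (aY k q C ^ m * aX k q C) - Sx q C m := by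
  induction m with
  | zero => simp [Sx]
  | succ m ih =>
    calc aX k q C * aY k q C ^ (m + 1)
        = (aX k q C * aY k q C ^ m) * aY k q C := by rw [pow_succ, mul_assoc]
      _ = (q ^ m • (aY k q C ^ m * aX k q C) - Sx q C m) * aY k q C := by rw [ih]
      _ = q ^ m • (aY k q C ^ m * (aX k q C * aY k q C)) - Sx q C m * aY k q C := by
          rw [sub_mul, smul_mul_assoc, mul_assoc]
      _ = q ^ m • (aY k q C ^ m * (q • (aY k q C * aX k q C) - aC k q C))
            - Sx q C m * aY k q C := by rw [rXY]
      _ = q ^ (m + 1) • (aY k q C ^ (m + 1) * aX k q C) - Sx q C (m + 1) := by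
          rw [Sx_succ]
          simp only [mul_sub, smul_sub, mul_smul_comm, smul_smul, mul_assoc, pow_succ]
          module

/-- the `T` sum for the `E Y^m` commutation. -/
noncomputable def Tt (q : k) (C : FreeAlgebra k GenU) (m : ℕ) : QSOAlg k q C :=
  ∑ j ∈ Finset.range (m - 1),
    br k q (q ^ (j + 1)) • (aY k q C ^ j * (aC k q C * aY k q C ^ (m - 2 - j)))

lemma Tt_one : Tt q C 1 = 0 := by simp [Tt]

lemma Tt_succ (m : ℕ) :
    Tt q C (m + 2) = Tt q C (m + 1) * aY k q C
      + br k q (q ^ (m + 1)) • (aY k q C ^ m * aC k q C) := by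
  rw [Tt, Tt, show m + 2 - 1 = m + 1 from by omega, show m + 1 - 1 = m from by omega,
    Finset.sum_range_succ, Finset.sum_mul]
  congr 1
  · refine Finset.sum_congr rfl fun j hj => ?_
    have hj' : j < m := Finset.mem_range.mp hj
    have h1 : m + 1 - 2 - j + 1 = m + 2 - 2 - j := by omega
    rw [smul_mul_assoc, mul_assoc, mul_assoc, ← pow_succ, h1]
  · have h2 : m + 2 - 2 - m = 0 := by omega
    simp [h2]

lemma pEYfull (hq0 : q ≠ 0) (hqq : q - q⁻¹ ≠ 0) (m : ℕ) :
    aE k q C * aY k q C ^ m = q⁻¹ ^ m • (aY k q C ^ m * aE k q C)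
      + br k q (q ^ m) • (aY k q C ^ (m - 1) * aX k q C) - Tt q C m := by
  induction m with
  | zero => simp [Tt, br_one]
  | succ m ih =>
    cases m with
    | zero =>
      rw [pow_one, rEY, br_pow_one hqq, Tt_one]
      simp only [pow_one, pow_zero, one_mul, one_smul, sub_zero, Nat.add_sub_cancel,
        zero_add, Nat.sub_self]
      abel
    | succ m =>
      calc aE k q C * aY k q C ^ (m + 1 + 1)
          = (aE k q C * aY k q C ^ (m + 1)) * aY k q C := by rw [pow_succ, mul_assoc]
        _ = (q⁻¹ ^ (m+1) • (aY k q C ^ (m+1) * aE k q C)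
              + br k q (q ^ (m+1)) • (aY k q C ^ m * aX k q C) - Tt q C (m+1)) * aY k q C := by
            rw [ih]; norm_num
        _ = q⁻¹ ^ (m+1) • (aY k q C ^ (m+1) * (aE k q C * aY k q C))
              + br k q (q ^ (m+1)) • (aY k q C ^ m * (aX k q C * aY k q C))
              - Tt q C (m+1) * aY k q C := by
            rw [sub_mul, add_mul, smul_mul_assoc, smul_mul_assoc, mul_assoc, mul_assoc]
        _ = q⁻¹ ^ (m+1) • (aY k q C ^ (m+1) * (aX k q C + q⁻¹ • (aY k q C * aE k q C)))
              + br k q (q ^ (m+1)) • (aY k q C ^ m * (q • (aY k q C * aX k q C) - aC k q C))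
              - Tt q C (m+1) * aY k q C := by rw [rEY, rXY]
        _ = _ := by
            rw [Tt_succ, br_succ hq0 hqq (m + 1),
              show m + 1 + 1 - 1 = m + 1 from by omega]
            simp only [mul_add, mul_sub, smul_add, smul_sub, add_smul, mul_smul_comm,
              smul_smul, mul_assoc, pow_succ]
            module

end Aux2
section Aux3
variable {k : Type} [Field k] {q : k} (C : FreeAlgebra k GenU)

lemma pKYpow (m : ℕ) :
    aK k q C * aY k q C ^ m = q⁻¹ ^ m • (aY k q C ^ m * aK k q C) :=
  pow_comm_smul _ _ _ (rKY C) m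

lemma pK'Ypow (hq0 : q ≠ 0) (m : ℕ) :
    aK' k q C * aY k q C ^ m = q ^ m • (aY k q C ^ m * aK' k q C) :=
  pow_comm_smul _ _ _ (rK'Y C hq0) m

lemma rXF : aX k q C * aF k q C = aF k q C * aX k q C - aY k q C * aK' k q C := by
  rw [rFX]; abel

lemma rEF' : aE k q C * aF k q C
    = aF k q C * aE k q C + (q - q⁻¹)⁻¹ • (aK k q C - aK' k q C) := by
  rw [← rEF]; abel

lemma pXFsucc (hq0 : q ≠ 0) (n : ℕ) :
    aX k q C * aF k q C ^ (n + 1) = aF k q C ^ (n + 1) * aX k q C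
      - csum q (n + 1) • (aF k q C ^ n * (aY k q C * aK' k q C)) := by
  induction n with
  | zero => simp [csum_one, rXF]
  | succ n ih =>
    calc aX k q C * aF k q C ^ (n + 2)
        = (aX k q C * aF k q C ^ (n + 1)) * aF k q C := by rw [pow_succ, mul_assoc]
      _ = (aF k q C ^ (n+1) * aX k q C
            - csum q (n+1) • (aF k q C ^ n * (aY k q C * aK' k q C))) * aF k q C := by
          rw [ih]
      _ = aF k q C ^ (n+1) * (aX k q C * aF k q C)
            - csum q (n+1) • (aF k q C ^ n * (aY k q C * (aK' k q C * aF k q C))) := by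
          rw [sub_mul, smul_mul_assoc, mul_assoc, mul_assoc, mul_assoc]
      _ = aF k q C ^ (n+1) * (aF k q C * aX k q C - aY k q C * aK' k q C)
            - csum q (n+1) • (aF k q C ^ n *
                (aY k q C * (q ^ 2 • (aF k q C * aK' k q C)))) := by
          rw [rXF, rK'F C hq0]
      _ = aF k q C ^ (n+1) * (aF k q C * aX k q C - aY k q C * aK' k q C)
            - (csum q (n+1) * q ^ 2) • (aF k q C ^ n *
                ((aY k q C * aF k q C) * aK' k q C)) := by
          rw [mul_smul_comm, mul_smul_comm, smul_smul, mul_assoc]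
      _ = _ := by
          rw [← rFY, csum_succ (n + 1)]
          simp only [mul_sub, mul_add, add_smul, one_smul, smul_smul, mul_smul_comm,
            smul_mul_assoc, mul_assoc, pow_succ]
          module

lemma pXF (hq0 : q ≠ 0) (n : ℕ) :
    aX k q C * aF k q C ^ n = aF k q C ^ n * aX k q C
      - csum q n • (aF k q C ^ (n - 1) * (aY k q C * aK' k q C)) := by
  cases n with
  | zero => simp [csum]
  | succ n => simpa using pXFsucc C hq0 n

lemma pEFsucc (hq0 : q ≠ 0) (n : ℕ) :
    aE k q C * aF k q C ^ (n + 1) = aF k q C ^ (n + 1) * aE k q C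
      + (q - q⁻¹)⁻¹ • (aF k q C ^ n *
          (dsum q (n + 1) • aK k q C - csum q (n + 1) • aK' k q C)) := by
  induction n with
  | zero => simp [csum_one, dsum_one, rEF']
  | succ n ih =>
    calc aE k q C * aF k q C ^ (n + 2)
        = (aE k q C * aF k q C ^ (n + 1)) * aF k q C := by rw [pow_succ, mul_assoc]
      _ = (aF k q C ^ (n+1) * aE k q C
            + (q - q⁻¹)⁻¹ • (aF k q C ^ n *
                (dsum q (n+1) • aK k q C - csum q (n+1) • aK' k q C))) * aF k q C := by
          rw [ih]
      _ = aF k q C ^ (n+1) * (aE k q C * aF k q C)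
            + (q - q⁻¹)⁻¹ • (aF k q C ^ n *
                (dsum q (n+1) • (aK k q C * aF k q C)
                  - csum q (n+1) • (aK' k q C * aF k q C))) := by
          rw [add_mul, smul_mul_assoc, mul_assoc, mul_assoc, sub_mul, smul_mul_assoc,
            smul_mul_assoc]
      _ = aF k q C ^ (n+1) * (aF k q C * aE k q C + (q - q⁻¹)⁻¹ • (aK k q C - aK' k q C))
            + (q - q⁻¹)⁻¹ • (aF k q C ^ n *
                (dsum q (n+1) • (q⁻¹ ^ 2 • (aF k q C * aK k q C))
                  - csum q (n+1) • (q ^ 2 • (aF k q C * aK' k q C)))) := by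
          rw [rEF', rKF, rK'F C hq0]
      _ = _ := by
          rw [csum_succ (n + 1), dsum_succ (n + 1)]
          simp only [mul_add, mul_sub, smul_add, smul_sub, add_smul, one_smul,
            mul_smul_comm, smul_smul, smul_mul_assoc, mul_assoc, pow_succ]
          module

lemma pEF (hq0 : q ≠ 0) (n : ℕ) :
    aE k q C * aF k q C ^ n = aF k q C ^ n * aE k q C
      + (q - q⁻¹)⁻¹ • (aF k q C ^ (n - 1) *
          (dsum q n • aK k q C - csum q n • aK' k q C)) := by
  cases n with
  | zero => simp [csum, dsum]
  | succ n => simpa using pEFsucc C hq0 n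

end Aux3
section Aux4
variable {k : Type} [Field k] {q : k} (C : FreeAlgebra k GenU) {r : k}

lemma smul_hw (a : QSOAlg k q C) :
    a • hwVec k q C r = Submodule.Quotient.mk a := by
  rw [hwVec, ← Submodule.Quotient.mk_smul, smul_eq_mul, mul_one]

lemma hw_X : aX k q C • hwVec k q C r = 0 := by
  rw [smul_hw, Submodule.Quotient.mk_eq_zero]
  exact Submodule.subset_span (Set.mem_insert_iff.2 (Or.inr (Set.mem_insert _ _)))

lemma hw_E : aE k q C • hwVec k q C r = 0 := by
  rw [smul_hw, Submodule.Quotient.mk_eq_zero]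
  exact Submodule.subset_span (Set.mem_insert _ _)

lemma hw_Kmem : aK k q C - algebraMap k (QSOAlg k q C) r ∈ vermaIdeal k q C r :=
  Submodule.subset_span (Set.mem_insert_iff.2 (Or.inr (Set.mem_insert_iff.2
    (Or.inr (Set.mem_singleton _)))))

lemma hw_K : aK k q C • hwVec k q C r
    = algebraMap k (QSOAlg k q C) r • hwVec k q C r := by
  rw [smul_hw, smul_hw]
  exact (Submodule.Quotient.eq _).mpr (hw_Kmem C)

lemma hw_K' (hr : r ≠ 0) : aK' k q C • hwVec k q C r
    = algebraMap k (QSOAlg k q C) r⁻¹ • hwVec k q C r := by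
  rw [smul_hw, smul_hw]
  refine (Submodule.Quotient.eq _).mpr ?_
  have h2 : (algebraMap k (QSOAlg k q C) r⁻¹ * aK' k q C) •
      (aK k q C - algebraMap k (QSOAlg k q C) r)
      = algebraMap k (QSOAlg k q C) r⁻¹ - aK' k q C := by
    rw [smul_eq_mul, mul_sub, mul_assoc, rK'K, mul_one, mul_assoc,
      ← Algebra.commutes r (aK' k q C), ← mul_assoc, ← map_mul,
      inv_mul_cancel₀ hr, map_one, one_mul]
  have h3 := Submodule.smul_mem (vermaIdeal k q C r)
    (algebraMap k (QSOAlg k q C) r⁻¹ * aK' k q C) (hw_Kmem C)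
  rw [h2] at h3
  simpa using Submodule.neg_mem _ h3

lemma smul_act (c : k) (w : QSOAlg k q C) (u : Verma k q C r) :
    (c • w) • u = algebraMap k (QSOAlg k q C) c • (w • u) := by
  rw [Algebra.smul_def, mul_smul]

lemma act_X (w : QSOAlg k q C) : (w * aX k q C) • hwVec k q C r = 0 := by
  rw [mul_smul, hw_X, smul_zero]

lemma act_E (w : QSOAlg k q C) : (w * aE k q C) • hwVec k q C r = 0 := by
  rw [mul_smul, hw_E, smul_zero]

lemma act_K (w : QSOAlg k q C) :
    (w * aK k q C) • hwVec k q C r = (r • w) • hwVec k q C r := by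
  rw [mul_smul, hw_K, ← mul_smul, ← Algebra.commutes, ← Algebra.smul_def]

lemma act_K' (hr : r ≠ 0) (w : QSOAlg k q C) :
    (w * aK' k q C) • hwVec k q C r = (r⁻¹ • w) • hwVec k q C r := by
  rw [mul_smul, hw_K' C hr, ← mul_smul, ← Algebra.commutes, ← Algebra.smul_def]

lemma act_sX (c : k) (w : QSOAlg k q C) :
    (c • (w * aX k q C)) • hwVec k q C r = 0 := by
  rw [smul_act, act_X, smul_zero]

lemma act_sE (c : k) (w : QSOAlg k q C) :
    (c • (w * aE k q C)) • hwVec k q C r = 0 := by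
  rw [smul_act, act_E, smul_zero]

lemma act_sK (c : k) (w : QSOAlg k q C) :
    (c • (w * aK k q C)) • hwVec k q C r = ((c * r) • w) • hwVec k q C r := by
  rw [smul_act, act_K, ← smul_act, smul_smul]

lemma act_sK' (hr : r ≠ 0) (c : k) (w : QSOAlg k q C) :
    (c • (w * aK' k q C)) • hwVec k q C r = ((c * r⁻¹) • w) • hwVec k q C r := by
  rw [smul_act, act_K' C hr, ← smul_act, smul_smul]

lemma Sx_stmt (n m : ℕ) : aF k q C ^ n * Sx q C m
    = aF k q C ^ n * ∑ j ∈ Finset.range m,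
        algebraMap k (QSOAlg k q C) (q ^ j) * aY k q C ^ j * aC k q C *
          aY k q C ^ (m - 1 - j) := by
  rw [Sx]
  congr 1
  refine Finset.sum_congr rfl fun j _ => ?_
  simp only [Algebra.smul_def, mul_assoc]

lemma Tt_stmt (n m : ℕ) : aF k q C ^ n * Tt q C m
    = aF k q C ^ n * ∑ j ∈ Finset.range (m - 1),
        algebraMap k (QSOAlg k q C) (br k q (q ^ (j + 1))) * aY k q C ^ j * aC k q C *
          aY k q C ^ (m - 2 - j) := by
  rw [Tt]
  congr 1
  refine Finset.sum_congr rfl fun j _ => ?_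
  simp only [Algebra.smul_def, mul_assoc]

/-- the big `X` commutation identity in the algebra. -/
lemma bigX (hq0 : q ≠ 0) (n m : ℕ) :
    aX k q C * (aF k q C ^ n * aY k q C ^ m)
      = q ^ m • ((aF k q C ^ n * aY k q C ^ m) * aX k q C)
        - aF k q C ^ n * Sx q C m
        - (csum q n * q ^ m) •
            ((aF k q C ^ (n - 1) * aY k q C ^ (m + 1)) * aK' k q C) := by
  calc aX k q C * (aF k q C ^ n * aY k q C ^ m)
      = (aX k q C * aF k q C ^ n) * aY k q C ^ m := by rw [mul_assoc]
    _ = (aF k q C ^ n * aX k q C) * aY k q C ^ m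
          - csum q n • ((aF k q C ^ (n-1) * (aY k q C * aK' k q C)) * aY k q C ^ m) := by
        rw [pXF C hq0 n, sub_mul, smul_mul_assoc]
    _ = aF k q C ^ n * (aX k q C * aY k q C ^ m)
          - csum q n • (aF k q C ^ (n-1) * (aY k q C * (aK' k q C * aY k q C ^ m))) := by
        simp only [mul_assoc]
    _ = aF k q C ^ n * (q ^ m • (aY k q C ^ m * aX k q C) - Sx q C m)
          - csum q n • (aF k q C ^ (n-1) *
              (aY k q C * (q ^ m • (aY k q C ^ m * aK' k q C)))) := by
        rw [pXY, pK'Ypow C hq0]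
    _ = aF k q C ^ n * (q ^ m • (aY k q C ^ m * aX k q C) - Sx q C m)
          - (csum q n * q ^ m) • (aF k q C ^ (n-1) *
              (aY k q C ^ (m + 1) * aK' k q C)) := by
        rw [mul_smul_comm, mul_smul_comm, smul_smul,
          show aY k q C * (aY k q C ^ m * aK' k q C)
              = aY k q C ^ (m + 1) * aK' k q C from by rw [← mul_assoc, ← pow_succ']]
    _ = _ := by
        simp only [mul_sub, mul_smul_comm, smul_smul, mul_assoc]

/-- the big `E` commutation identity in the algebra. -/
lemma bigE (hq0 : q ≠ 0) (hqq : q - q⁻¹ ≠ 0) (n m : ℕ) :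
    aE k q C * (aF k q C ^ n * aY k q C ^ m)
      = q⁻¹ ^ m • ((aF k q C ^ n * aY k q C ^ m) * aE k q C)
        + br k q (q ^ m) • ((aF k q C ^ n * aY k q C ^ (m - 1)) * aX k q C)
        - aF k q C ^ n * Tt q C m
        + ((q - q⁻¹)⁻¹ * (dsum q n * q⁻¹ ^ m)) •
            ((aF k q C ^ (n - 1) * aY k q C ^ m) * aK k q C)
        - ((q - q⁻¹)⁻¹ * (csum q n * q ^ m)) •
            ((aF k q C ^ (n - 1) * aY k q C ^ m) * aK' k q C) := by
  calc aE k q C * (aF k q C ^ n * aY k q C ^ m)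
      = (aE k q C * aF k q C ^ n) * aY k q C ^ m := by rw [mul_assoc]
    _ = (aF k q C ^ n * aE k q C) * aY k q C ^ m
          + (q - q⁻¹)⁻¹ • ((aF k q C ^ (n-1) *
              (dsum q n • aK k q C - csum q n • aK' k q C)) * aY k q C ^ m) := by
        rw [pEF C hq0 n, add_mul, smul_mul_assoc]
    _ = aF k q C ^ n * (aE k q C * aY k q C ^ m)
          + (q - q⁻¹)⁻¹ • (aF k q C ^ (n-1) *
              (dsum q n • (aK k q C * aY k q C ^ m)
                - csum q n • (aK' k q C * aY k q C ^ m))) := by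
        simp only [mul_assoc, sub_mul, smul_mul_assoc]
    _ = aF k q C ^ n * (q⁻¹ ^ m • (aY k q C ^ m * aE k q C)
            + br k q (q ^ m) • (aY k q C ^ (m - 1) * aX k q C) - Tt q C m)
          + (q - q⁻¹)⁻¹ • (aF k q C ^ (n-1) *
              (dsum q n • (q⁻¹ ^ m • (aY k q C ^ m * aK k q C))
                - csum q n • (q ^ m • (aY k q C ^ m * aK' k q C)))) := by
        rw [pEYfull C hq0 hqq, pKYpow, pK'Ypow C hq0]
    _ = _ := by
        simp only [mul_add, mul_sub, smul_add, smul_sub, mul_smul_comm, smul_smul,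
          mul_assoc]
        module

end Aux4
section Aux5
variable {k : Type} [Field k] {q : k} {r : k}

lemma dsum_succ' (n : ℕ) : dsum q (n + 1) = dsum q n + (q⁻¹ ^ 2) ^ n := by
  simp [dsum, Finset.sum_range_succ]

lemma brX (hq0 : q ≠ 0) (hqq : q - q⁻¹ ≠ 0) (n : ℕ) :
    csum q (n + 1) = q ^ n * br k q (q ^ (n + 1)) := by
  induction n with
  | zero =>
    rw [csum_one, pow_zero, one_mul, pow_one, br]
    exact (div_self hqq).symm
  | succ n ih =>
    rw [csum_succ (n + 1), ih, br_succ hq0 hqq (n + 1)]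
    have hp : q ^ (n + 1) * q⁻¹ ^ (n + 1) = 1 := by
      rw [← mul_pow, mul_inv_cancel₀ hq0, one_pow]
    linear_combination -hp

lemma brD (hq0 : q ≠ 0) (hqq : q - q⁻¹ ≠ 0) (n : ℕ) :
    dsum q (n + 1) = q⁻¹ ^ n * br k q (q ^ (n + 1)) := by
  induction n with
  | zero =>
    rw [dsum_one, pow_zero, one_mul, pow_one, br]
    exact (div_self hqq).symm
  | succ n ih =>
    rw [dsum_succ' (n + 1), ih, br_succ hq0 hqq (n + 1)]
    have hp : q⁻¹ ^ (n + 1) * q = q⁻¹ ^ n := by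
      rw [pow_succ, mul_assoc, inv_mul_cancel₀ hq0, mul_one]
    linear_combination (-(br k q (q ^ (n + 1)))) * hp

lemma scX (hq0 : q ≠ 0) (hqq : q - q⁻¹ ≠ 0) (n m : ℕ) :
    csum q n * q ^ m * r⁻¹ = q ^ ((m : ℤ) + (n : ℤ) - 1) * r⁻¹ * br k q (q ^ n) := by
  cases n with
  | zero => simp [csum, br]
  | succ n =>
    have hz : (m : ℤ) + ((n : ℕ) + 1 : ℕ) - 1 = ((m + n : ℕ) : ℤ) := by push_cast; ring
    rw [hz, zpow_natCast, brX hq0 hqq, pow_add]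
    ring

lemma scE (hq0 : q ≠ 0) (hqq : q - q⁻¹ ≠ 0) (n m : ℕ) :
    (q - q⁻¹)⁻¹ * (dsum q n * q⁻¹ ^ m) * r - (q - q⁻¹)⁻¹ * (csum q n * q ^ m) * r⁻¹
      = br k q (q ^ n) * br k q (q ^ ((1 : ℤ) - (m : ℤ) - (n : ℤ)) * r) := by
  cases n with
  | zero => simp [csum, dsum, br]
  | succ n =>
    have hz : (1 : ℤ) - (m : ℤ) - ((n : ℕ) + 1 : ℕ) = -((m + n : ℕ) : ℤ) := by
      push_cast; ring
    rw [hz, zpow_neg, zpow_natCast, brX hq0 hqq, brD hq0 hqq]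
    rw [show br k q ((q ^ (m + n))⁻¹ * r)
        = (q⁻¹ ^ (m + n) * r - q ^ (m + n) * r⁻¹) / (q - q⁻¹) from by
      rw [br, mul_inv, inv_inv, ← inv_pow]]
    rw [pow_add, pow_add, pow_add]
    ring

end Aux5

/-- The commutation formulas for `[X, F^n Y^m]` and `[E, F^n Y^m]` applied to the highest
weight vector of the Verma module `Z(r)`. -/
theorem commutator_formulas (k : Type) [Field k] (q : k)
    (hchar : (2 : k) ≠ 0) (hq0 : q ≠ 0) (hq2 : q ^ 2 ≠ 1)
    (C : FreeAlgebra k GenU) (hC : uC k q C ∈ Subalgebra.center k (Uq k q))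
    (r : k) (hr : r ≠ 0) (n m : ℕ) :
    (aX k q C * (aF k q C ^ n * aY k q C ^ m) - (aF k q C ^ n * aY k q C ^ m) * aX k q C) •
        hwVec k q C r =
      -((aF k q C ^ n * ∑ j ∈ Finset.range m,
          algebraMap k (QSOAlg k q C) (q ^ j) * aY k q C ^ j * aC k q C *
            aY k q C ^ (m - 1 - j)) • hwVec k q C r) -
        (algebraMap k (QSOAlg k q C) (q ^ ((m : ℤ) + (n : ℤ) - 1) * r⁻¹ * br k q (q ^ n)) *
          (aF k q C ^ (n - 1) * aY k q C ^ (m + 1))) • hwVec k q C r ∧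
    (aE k q C * (aF k q C ^ n * aY k q C ^ m) - (aF k q C ^ n * aY k q C ^ m) * aE k q C) •
        hwVec k q C r =
      -((aF k q C ^ n * ∑ j ∈ Finset.range (m - 1),
          algebraMap k (QSOAlg k q C) (br k q (q ^ (j + 1))) * aY k q C ^ j * aC k q C *
            aY k q C ^ (m - 2 - j)) • hwVec k q C r) +
        (algebraMap k (QSOAlg k q C)
            (br k q (q ^ n) * br k q (q ^ ((1 : ℤ) - (m : ℤ) - (n : ℤ)) * r)) *
          (aF k q C ^ (n - 1) * aY k q C ^ m)) • hwVec k q C r := by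
  have hqq : q - q⁻¹ ≠ 0 := sub_ne_zero.mpr fun h => hq2 (by
    rw [sq]; nth_rewrite 2 [h]; exact mul_inv_cancel₀ hq0)
  constructor
  · conv_lhs => rw [sub_smul]
    rw [show ((aF k q C ^ n * aY k q C ^ m) * aX k q C) • hwVec k q C r = 0 from
      act_X C _, sub_zero, bigX C hq0 n m]
    simp only [sub_smul]
    rw [act_sX, zero_sub, act_sK' C hr, scX hq0 hqq n m]
    rw [← Sx_stmt C n m, ← Algebra.smul_def]
  · conv_lhs => rw [sub_smul]
    rw [show ((aF k q C ^ n * aY k q C ^ m) * aE k q C) • hwVec k q C r = 0 from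
      act_E C _, sub_zero, bigE C hq0 hqq n m]
    simp only [sub_smul, add_smul]
    rw [act_sE, act_sX, add_zero, zero_sub]
    rw [act_sK, act_sK' C hr]
    rw [add_sub_assoc, ← sub_smul, ← sub_smul, scE hq0 hqq n m]
    rw [← Tt_stmt C n m, ← Algebra.smul_def]

end QSO
end
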